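/- arXiv:2401.16357 — 5 statements merged into one kernel-verified Lean document; each statement's English description precedes it below -/
import Mathlib

section
/- The forest F_β is acyclic, i.e. it contains no cycle. -/
open Function

/-- The forest `F_β`: two distinct elements `a, b` are adjacent iff both lie in some
bag and one is the image of the other under `β`. -/
def forestF {ι S : Type*} (B : ι → Set S) (β : S → S) : SimpleGraph S :=
  SimpleGraph.fromRel
    (fun a b => (a ∈ ⋃ v, B v) ∧ (b ∈ ⋃ v, B v) ∧ b = β a)

variable {ι S : Type*}

private lemma forestF_getVert_mem_support {V : Type*} {G : SimpleGraph V} {a b : V}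
    (p : G.Walk a b) (n : ℕ) : p.getVert n ∈ p.support := by
  induction p generalizing n with
  | nil => simp [SimpleGraph.Walk.getVert]
  | cons h q ih =>
      cases n with
      | zero => simp
      | succ n => simp only [SimpleGraph.Walk.getVert_cons_succ,
          SimpleGraph.Walk.support_cons, List.mem_cons]; exact Or.inr (ih n)

private lemma forestF_getVert_inj {V : Type*} {G : SimpleGraph V} {a b : V}
    {p : G.Walk a b} (hp : p.IsPath) : ∀ {n m : ℕ}, n ≤ p.length → m ≤ p.length →
    p.getVert n = p.getVert m → n = m := by
  induction p with
  | nil => intro n m hn hm _; simp only [SimpleGraph.Walk.length_nil, Nat.le_zero] at hn hm; omega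
  | cons h q ih =>
      rw [SimpleGraph.Walk.cons_isPath_iff] at hp
      intro n m hn hm hnm
      cases n with
      | zero =>
          cases m with
          | zero => rfl
          | succ m =>
              exfalso
              simp only [SimpleGraph.Walk.getVert_zero,
                SimpleGraph.Walk.getVert_cons_succ] at hnm
              exact hp.2 (hnm ▸ forestF_getVert_mem_support q m)
      | succ n =>
          cases m with
          | zero =>
              exfalso
              simp only [SimpleGraph.Walk.getVert_zero,
                SimpleGraph.Walk.getVert_cons_succ] at hnm
              exact hp.2 (hnm ▸ forestF_getVert_mem_support q n)
          | succ m =>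
              simp only [SimpleGraph.Walk.getVert_cons_succ] at hnm
              simp only [SimpleGraph.Walk.length_cons] at hn hm
              have := ih hp.1 (by omega) (by omega) hnm
              omega

private lemma forestF_iterate_mem {B : ι → Set S} {next : ι → ι} {β : S → S}
    (hmap : ∀ v, ∀ s ∈ B v, β s ∈ B (next v)) :
    ∀ (j : ℕ) (v : ι) (s : S), s ∈ B v → β^[j] s ∈ B (next^[j] v) := by
  intro j
  induction j with
  | zero => intro v s hs; simpa using hs
  | succ j ih =>
      intro v s hs
      rw [Function.iterate_succ_apply, Function.iterate_succ_apply]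
      exact ih (next v) (β s) (hmap v s hs)

private lemma forestF_path_shape {B : ι → Set S} {β : S → S}
    {a b : S} (p : (forestF B β).Walk a b) (hp : p.IsPath) :
    ∃ j k : ℕ, j + k = p.length ∧ β^[j] a = β^[k] b ∧
      (0 < j → p.getVert 1 = β a) ∧ (0 < k → p.getVert (p.length - 1) = β b) := by
  induction p with
  | nil => exact ⟨0, 0, rfl, rfl, by omega, by omega⟩
  | @cons a x b h q ih =>
      rw [SimpleGraph.Walk.cons_isPath_iff] at hp
      obtain ⟨j, k, hjk, heq, hfst, hlst⟩ := ih hp.1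
      have hadj := h
      rw [forestF, SimpleGraph.fromRel_adj] at hadj
      rcases hadj.2 with hup | hdown
      · -- x = β a
        obtain ⟨_, _, hx⟩ := hup
        refine ⟨j + 1, k, by simp [SimpleGraph.Walk.length_cons]; omega, ?_, ?_, ?_⟩
        · rw [Function.iterate_succ_apply, ← hx]; exact heq
        · intro _
          simp [SimpleGraph.Walk.getVert_cons, hx]
        · intro hk
          have hq1 : 1 ≤ q.length := by omega
          have : (SimpleGraph.Walk.cons h q).length - 1 = (q.length - 1) + 1 := by
            simp [SimpleGraph.Walk.length_cons]; omega
          rw [this, SimpleGraph.Walk.getVert_cons_succ]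
          exact hlst hk
      · -- a = β x
        obtain ⟨_, _, ha⟩ := hdown
        rcases Nat.eq_zero_or_pos j with hj0 | hjpos
        · subst hj0
          refine ⟨0, k + 1, by simp [SimpleGraph.Walk.length_cons]; omega, ?_, by omega, ?_⟩
          · rw [Function.iterate_succ_apply', ← heq]
            simpa using ha
          · intro _
            rcases Nat.eq_zero_or_pos k with hk0 | hkpos
            · subst hk0
              have hxb : x = b := by simpa using heq
              have hq0 : (SimpleGraph.Walk.cons h q).length - 1 = 0 := by
                simp only [SimpleGraph.Walk.length_cons]; omega
              rw [hq0]
              simp [ha, hxb]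
            · have : (SimpleGraph.Walk.cons h q).length - 1 = (q.length - 1) + 1 := by
                simp [SimpleGraph.Walk.length_cons]; omega
              rw [this, SimpleGraph.Walk.getVert_cons_succ]
              exact hlst hkpos
        · exfalso
          have h1 : q.getVert 1 = β x := hfst hjpos
          have : q.getVert 1 = a := by rw [h1, ← ha]
          exact hp.2 (this ▸ forestF_getVert_mem_support q 1)

/-- The forest `F_β` is acyclic. -/
theorem forestF_isAcyclic (next : ι → ι)
    (hnext : ∀ (v : ι) (j k : ℕ), next^[j] v = next^[k] v → j = k)
    (B : ι → Set S) (hdisj : Pairwise (Disjoint on B))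
    (β : S → S) (hmap : ∀ v, ∀ s ∈ B v, β s ∈ B (next v))
    (hinj : ∀ v, Set.InjOn β (B v)) :
    (forestF B β).IsAcyclic := by
  have huniq : ∀ {s : S} {u u' : ι}, s ∈ B u → s ∈ B u' → u = u' := by
    intro s u u' hu hu'
    by_contra hne
    exact Set.disjoint_left.mp (hdisj hne) hu hu'
  intro v c hc
  cases c with
  | nil => exact hc.ne_nil rfl
  | @cons _ w _ h p =>
      rw [SimpleGraph.Walk.cons_isCycle_iff] at hc
      have hlen : 2 ≤ p.length := by
        have h3 := (SimpleGraph.Walk.cons_isCycle_iff p h).mpr hc |>.three_le_length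
        simp only [SimpleGraph.Walk.length_cons] at h3
        omega
      obtain ⟨j, k, hjk, heq, hfst, hlst⟩ := forestF_path_shape p hc.1
      have hadj := h
      rw [forestF, SimpleGraph.fromRel_adj] at hadj
      have hvU : v ∈ ⋃ u, B u := by
        rcases hadj.2 with ⟨h1, _, _⟩ | ⟨_, h2, _⟩ <;> assumption
      have hwU : w ∈ ⋃ u, B u := by
        rcases hadj.2 with ⟨_, h2, _⟩ | ⟨h1, _, _⟩ <;> assumption
      obtain ⟨v0, hv0⟩ := Set.mem_iUnion.mp hvU
      obtain ⟨w0, hw0⟩ := Set.mem_iUnion.mp hwU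
      rcases hadj.2 with ⟨_, _, hw⟩ | ⟨_, _, hv⟩
      · -- w = β v
        have heq' : β^[j + 1] v = β^[k] v := by
          rw [Function.iterate_succ_apply, ← hw]; exact heq
        have hmem1 := forestF_iterate_mem hmap (j + 1) v0 v hv0
        have hmem2 := forestF_iterate_mem hmap k v0 v hv0
        rw [heq'] at hmem1
        have hk : j + 1 = k := hnext v0 _ _ (huniq hmem1 hmem2)
        have h1 : p.getVert (p.length - 1) = w := by
          rw [hlst (by omega), ← hw]
        have h0 : p.getVert 0 = w := p.getVert_zero
        have := forestF_getVert_inj hc.1 (n := p.length - 1) (m := 0)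
          (by omega) (by omega) (by rw [h0, h1])
        omega
      · -- v = β w
        have heq' : β^[j] w = β^[k + 1] w := by
          rw [Function.iterate_succ_apply, ← hv]; exact heq
        have hmem1 := forestF_iterate_mem hmap j w0 w hw0
        have hmem2 := forestF_iterate_mem hmap (k + 1) w0 w hw0
        rw [heq'] at hmem1
        have hj : j = k + 1 := hnext w0 _ _ (huniq hmem1 hmem2)
        have h1 : p.getVert 1 = v := by rw [hfst (by omega), ← hv]
        have h0 : p.getVert p.length = v := p.getVert_length
        have := forestF_getVert_inj hc.1 (n := 1) (m := p.length)
          (by omega) (by omega) (by rw [h0, h1])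
        omega
end

section
/- For s ∈ B(u) and t ∈ B(w), the vertices s and t lie in the same connected component of F_β (i.e. s and t are joined by a path in F_β) if and only if there exist j, k ∈ ℕ with β^[j](s) = β^[k](t). -/
open Function

variable {ι S : Type*}

/-- Two bag elements `s ∈ B u` and `t ∈ B w` lie in the same connected component of
`F_β` iff some `β`-iterates of them coincide. -/
theorem forestF_reachable_iff_iterates_meet (next : ι → ι)
    (hnext : ∀ (v : ι) (j k : ℕ), next^[j] v = next^[k] v → j = k)
    (B : ι → Set S) (hdisj : Pairwise (Disjoint on B))
    (β : S → S) (hmap : ∀ v, ∀ s ∈ B v, β s ∈ B (next v))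
    (hinj : ∀ v, Set.InjOn β (B v))
    (u w : ι) (s t : S) (hs : s ∈ B u) (ht : t ∈ B w) :
    (forestF B β).Reachable s t ↔ ∃ j k : ℕ, β^[j] s = β^[k] t := by
  constructor
  · intro h
    obtain ⟨p⟩ := h
    clear hs ht
    induction p with
    | nil => exact ⟨0, 0, rfl⟩
    | cons h p ih =>
      obtain ⟨j, k, hjk⟩ := ih
      rw [forestF, SimpleGraph.fromRel_adj] at h
      rcases h.2 with ⟨_, _, hba⟩ | ⟨_, _, hab⟩
      · exact ⟨j + 1, k, by rw [iterate_succ_apply, ← hba, hjk]⟩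
      · exact ⟨j, k + 1, by
          rw [hab, ← iterate_succ_apply, iterate_succ_apply', hjk]
          exact (iterate_succ_apply' β k _).symm⟩
  · rintro ⟨j, k, hjk⟩
    have key : ∀ (n : ℕ) (v : ι) (x : S), x ∈ B v →
        (forestF B β).Reachable x (β^[n] x) ∧ β^[n] x ∈ B (next^[n] v) := by
      intro n
      induction n with
      | zero => exact fun v x hx => ⟨SimpleGraph.Reachable.refl x, hx⟩
      | succ n ih =>
        intro v x hx
        obtain ⟨hr, hb⟩ := ih v x hx
        have hb' : β (β^[n] x) ∈ B (next (next^[n] v)) := hmap _ _ hb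
        have hb2 : β (β^[n] x) ∈ B (next^[n + 1] v) := by
          rw [iterate_succ_apply']; exact hb'
        have hvne : next^[n] v ≠ next^[n + 1] v := fun h => by
          simpa using hnext v n (n + 1) h
        have hne : β^[n] x ≠ β (β^[n] x) := by
          intro he
          exact Set.disjoint_left.1 (hdisj hvne) hb (by rw [he]; exact hb2)
        have hadj : (forestF B β).Adj (β^[n] x) (β (β^[n] x)) := by
          rw [forestF, SimpleGraph.fromRel_adj]
          exact ⟨hne, Or.inl ⟨Set.mem_iUnion.2 ⟨_, hb⟩, Set.mem_iUnion.2 ⟨_, hb'⟩, rfl⟩⟩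
        refine ⟨?_, by simp only [iterate_succ_apply']; exact hb'⟩
        rw [iterate_succ_apply']
        exact hr.trans hadj.reachable
    have h1 := (key j u s hs).1
    have h2 := (key k w t ht).1
    exact h1.trans (hjk ▸ h2.symm)
end

section
/- If s₁, s₂ ∈ B(v) and s₁ ≠ s₂, then s₁ and s₂ lie in different connected components of F_β (there is no path in F_β joining them). -/
open Function

variable {ι S : Type*}

lemma forestF_iter_mem (next : ι → ι) (B : ι → Set S) (β : S → S)
    (hmap : ∀ v, ∀ s ∈ B v, β s ∈ B (next v)) :
    ∀ (j : ℕ) (v : ι) (s : S), s ∈ B v → β^[j] s ∈ B (next^[j] v) := by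
  intro j
  induction j with
  | zero => intro v s hs; simpa using hs
  | succ n ih =>
    intro v s hs
    rw [Function.iterate_succ_apply, Function.iterate_succ_apply]
    exact ih (next v) (β s) (hmap v s hs)

lemma forestF_iter_injOn (next : ι → ι) (B : ι → Set S) (β : S → S)
    (hmap : ∀ v, ∀ s ∈ B v, β s ∈ B (next v)) (hinj : ∀ v, Set.InjOn β (B v)) :
    ∀ (j : ℕ) (v : ι), Set.InjOn β^[j] (B v) := by
  intro j
  induction j with
  | zero => intro v a ha b hb h; simpa using h
  | succ n ih =>
    intro v a ha b hb h
    rw [Function.iterate_succ_apply, Function.iterate_succ_apply] at h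
    exact hinj v ha hb (ih (next v) (hmap v a ha) (hmap v b hb) h)

/-- Two distinct elements of the same bag lie in different connected components
of `F_β`. -/
theorem forestF_same_bag_not_reachable (next : ι → ι)
    (hnext : ∀ (v : ι) (j k : ℕ), next^[j] v = next^[k] v → j = k)
    (B : ι → Set S) (hdisj : Pairwise (Disjoint on B))
    (β : S → S) (hmap : ∀ v, ∀ s ∈ B v, β s ∈ B (next v))
    (hinj : ∀ v, Set.InjOn β (B v))
    (v : ι) (s₁ s₂ : S) (hs₁ : s₁ ∈ B v) (hs₂ : s₂ ∈ B v) (hne : s₁ ≠ s₂) :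
    ¬ (forestF B β).Reachable s₁ s₂ := by
  intro hreach
  obtain ⟨p⟩ := hreach
  -- From any walk, extract iterates matching up.
  have key : ∀ {a b : S} (_ : (forestF B β).Walk a b), ∃ j k : ℕ, β^[j] a = β^[k] b := by
    intro a b p
    induction p with
    | nil => exact ⟨0, 0, rfl⟩
    | cons hadj _ ih =>
      obtain ⟨j, k, hjk⟩ := ih
      rw [forestF, SimpleGraph.fromRel_adj] at hadj
      rcases hadj.2 with ⟨_, _, hc⟩ | ⟨_, _, ha⟩
      · -- c = β a
        refine ⟨j + 1, k, ?_⟩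
        rw [Function.iterate_succ_apply, ← hc, hjk]
      · -- a = β c
        refine ⟨j, k + 1, ?_⟩
        rw [ha, ← Function.iterate_succ_apply, Function.iterate_succ_apply', hjk,
          Function.iterate_succ_apply']
  obtain ⟨j, k, hjk⟩ := key p
  have h₁ : β^[j] s₁ ∈ B (next^[j] v) := forestF_iter_mem next B β hmap j v s₁ hs₁
  have h₂ : β^[k] s₂ ∈ B (next^[k] v) := forestF_iter_mem next B β hmap k v s₂ hs₂
  have hvv : next^[j] v = next^[k] v := by
    by_contra hvne
    exact Set.disjoint_left.mp (hdisj hvne) h₁ (hjk ▸ h₂)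
  have hj : j = k := hnext v j k hvv
  subst hj
  exact hne (forestF_iter_injOn next B β hmap hinj j v hs₁ hs₂ hjk)
end

section
/- For every v ∈ ι, the map from B(v) to the set of connected components of F_β that sends s to the connected component of s is injective; hence the cardinality of B(v) is a lower bound on the number of connected components of F_β. -/
open Function

variable {ι S : Type*}

/-- Invariant relation: equal, or forward orbits meet. -/
def forestRel (B : ι → Set S) (β : S → S) (a b : S) : Prop :=
  a = b ∨ ((a ∈ ⋃ v, B v) ∧ (b ∈ ⋃ v, B v) ∧ ∃ m n, β^[m] a = β^[n] b)

lemma forestRel_symm {B : ι → Set S} {β : S → S} {a b : S}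
    (h : forestRel B β a b) : forestRel B β b a := by
  rcases h with rfl | ⟨ha, hb, m, n, h⟩
  · exact Or.inl rfl
  · exact Or.inr ⟨hb, ha, n, m, h.symm⟩

lemma forestRel_trans {B : ι → Set S} {β : S → S} {a b c : S}
    (h1 : forestRel B β a b) (h2 : forestRel B β b c) : forestRel B β a c := by
  rcases h1 with rfl | ⟨ha, hb, m, n, h1⟩
  · exact h2
  rcases h2 with rfl | ⟨hb', hc, p, q, h2⟩
  · exact Or.inr ⟨ha, hb, m, n, h1⟩
  refine Or.inr ⟨ha, hc, p + m, n + q, ?_⟩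
  calc β^[p + m] a = β^[p] (β^[m] a) := Function.iterate_add_apply β p m a
    _ = β^[p] (β^[n] b) := by rw [h1]
    _ = β^[n] (β^[p] b) := by
        rw [← Function.iterate_add_apply, ← Function.iterate_add_apply, Nat.add_comm]
    _ = β^[n] (β^[q] c) := by rw [h2]
    _ = β^[n + q] c := (Function.iterate_add_apply β n q c).symm

lemma forestRel_of_adj {B : ι → Set S} {β : S → S} {a b : S}
    (h : (forestF B β).Adj a b) : forestRel B β a b := by
  rw [forestF, SimpleGraph.fromRel_adj] at h
  rcases h with ⟨_, ⟨ha, hb, rfl⟩ | ⟨hb, ha, rfl⟩⟩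
  · exact Or.inr ⟨ha, hb, 1, 0, rfl⟩
  · exact Or.inr ⟨ha, hb, 0, 1, rfl⟩

lemma forestRel_of_reachable {B : ι → Set S} {β : S → S} {a b : S}
    (h : (forestF B β).Reachable a b) : forestRel B β a b := by
  obtain ⟨w⟩ := h
  induction w with
  | nil => exact Or.inl rfl
  | cons hadj _ ih => exact forestRel_trans (forestRel_of_adj hadj) ih

lemma iter_mem {next : ι → ι} {B : ι → Set S} {β : S → S}
    (hmap : ∀ v, ∀ s ∈ B v, β s ∈ B (next v)) (m : ℕ) (v : ι) {s : S}
    (hs : s ∈ B v) : β^[m] s ∈ B (next^[m] v) := by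
  induction m with
  | zero => exact hs
  | succ k ih =>
      rw [Function.iterate_succ_apply', Function.iterate_succ_apply']
      exact hmap _ _ ih

lemma iter_injOn {next : ι → ι} {B : ι → Set S} {β : S → S}
    (hmap : ∀ v, ∀ s ∈ B v, β s ∈ B (next v))
    (hinj : ∀ v, Set.InjOn β (B v)) (m : ℕ) (v : ι) :
    Set.InjOn β^[m] (B v) := by
  induction m with
  | zero => exact fun a _ b _ h => h
  | succ k ih =>
      intro a ha b hb h
      rw [Function.iterate_succ_apply', Function.iterate_succ_apply'] at h
      exact ih ha hb (hinj (next^[k] v) (iter_mem hmap k v ha) (iter_mem hmap k v hb) h)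

/-- For every `v`, the map sending `s ∈ B v` to its connected component in `F_β` is
injective; hence the cardinality of `B v` is a lower bound on the number of connected
components of `F_β`. -/
theorem forestF_bag_to_components_injective (next : ι → ι)
    (hnext : ∀ (v : ι) (j k : ℕ), next^[j] v = next^[k] v → j = k)
    (B : ι → Set S) (hdisj : Pairwise (Disjoint on B))
    (β : S → S) (hmap : ∀ v, ∀ s ∈ B v, β s ∈ B (next v))
    (hinj : ∀ v, Set.InjOn β (B v)) (v : ι) :
    Set.InjOn (fun s => (forestF B β).connectedComponentMk s) (B v) ∧
      Cardinal.mk (B v) ≤ Cardinal.mk ((forestF B β).ConnectedComponent) := by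
  have key : Set.InjOn (fun s => (forestF B β).connectedComponentMk s) (B v) := by
    intro s hs t ht h
    have hr : (forestF B β).Reachable s t :=
      SimpleGraph.ConnectedComponent.eq.mp h
    rcases forestRel_of_reachable hr with rfl | ⟨_, _, m, n, heq⟩
    · rfl
    · have hms : β^[m] s ∈ B (next^[m] v) := iter_mem hmap m v hs
      have hnt : β^[n] t ∈ B (next^[n] v) := iter_mem hmap n v ht
      have hvv : next^[m] v = next^[n] v := by
        by_contra hne
        exact (hdisj hne).le_bot ⟨hms, heq ▸ hnt⟩
      have : m = n := hnext v m n hvv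
      subst this
      exact iter_injOn hmap hinj m v hs ht heq
  refine ⟨key, ?_⟩
  exact Cardinal.mk_le_of_injective (f := fun s : B v =>
    (forestF B β).connectedComponentMk s.1) fun a b h => Subtype.ext (key a.2 b.2 h)
end

section
/- Let (R_i)_{i∈ℕ} be a sequence of rectangles in ℤ² such that for every even i the pair (R_i, R_{i+1}) is well-joined in a vertical-to-horizontal way and for every odd i the pair (R_i, R_{i+1}) is well-joined in a horizontal-to-vertical way, and suppose the side lengths of the R_i are unbounded (for every N there is an i such that some side of R_i has length at least N). Let ω be a bond configuration such that for every even i there is a vertical crossing of R_i using only ω-open edges with both endpoints in R_i, and for every odd i there is a horizontal crossing of R_i using only ω-open edges with both endpoints in R_i. Then the graph with vertex set ⋃_i R_i whose edges are the ω-open edges having both endpoints in a common R_i has an infinite connected component. -/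
/-- The lattice graph `ℤ²`: two vertices are adjacent iff their ℓ¹-distance is `1`. -/
def latticeGraph : SimpleGraph (ℤ × ℤ) where
  Adj x y := |x.1 - y.1| + |x.2 - y.2| = 1
  symm := by
    constructor
    intro x y h
    rw [abs_sub_comm, abs_sub_comm x.2] at h
    exact h
  loopless := by constructor; intro x h; simp at h

/-- A block: a finite nonempty set of consecutive integers. -/
def IsBlock (B : Set ℤ) : Prop := ∃ a b : ℤ, a ≤ b ∧ B = Set.Icc a b

/-- The subgraph of the open subgraph of `ω` induced on a set `R`: `ω`-open edges with
both endpoints in `R`. -/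
def restrictedOpen (ω : Set (Sym2 (ℤ × ℤ))) (R : Set (ℤ × ℤ)) : SimpleGraph (ℤ × ℤ) :=
  SimpleGraph.fromRel
    (fun x y => latticeGraph.Adj x y ∧ s(x, y) ∈ ω ∧ x ∈ R ∧ y ∈ R)

/-- A horizontal crossing of `R`: a path of `ω`-open edges inside `R` joining a vertex
of minimal first coordinate to a vertex of maximal first coordinate. -/
def HasCrossH (ω : Set (Sym2 (ℤ × ℤ))) (R : Set (ℤ × ℤ)) : Prop :=
  ∃ u v : ℤ × ℤ, u ∈ R ∧ v ∈ R ∧ (∀ w ∈ R, u.1 ≤ w.1) ∧ (∀ w ∈ R, w.1 ≤ v.1) ∧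
    (restrictedOpen ω R).Reachable u v

/-- A vertical crossing of `R`: a path of `ω`-open edges inside `R` joining a vertex
of minimal second coordinate to a vertex of maximal second coordinate. -/
def HasCrossV (ω : Set (Sym2 (ℤ × ℤ))) (R : Set (ℤ × ℤ)) : Prop :=
  ∃ u v : ℤ × ℤ, u ∈ R ∧ v ∈ R ∧ (∀ w ∈ R, u.2 ≤ w.2) ∧ (∀ w ∈ R, w.2 ≤ v.2) ∧
    (restrictedOpen ω R).Reachable u v

/-- The graph on `⋃ i, Rᵢ` whose edges are the `ω`-open edges having both endpoints in
a common `Rᵢ`. -/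
def roadGraph (ω : Set (Sym2 (ℤ × ℤ))) (R : ℕ → Set (ℤ × ℤ)) : SimpleGraph (ℤ × ℤ) :=
  SimpleGraph.fromRel
    (fun x y => latticeGraph.Adj x y ∧ s(x, y) ∈ ω ∧ ∃ i, x ∈ R i ∧ y ∈ R i)


private def Stp (u v : ℤ × ℤ) : Prop := |u.1 - v.1| + |u.2 - v.2| = 1

private lemma stp_iff {u v : ℤ × ℤ} : Stp u v ↔
    (u.1 = v.1 ∧ (u.2 = v.2 + 1 ∨ v.2 = u.2 + 1)) ∨
    (u.2 = v.2 ∧ (u.1 = v.1 + 1 ∨ v.1 = u.1 + 1)) := by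
  unfold Stp
  rcases abs_cases (u.1 - v.1) with ⟨h1, h2⟩ | ⟨h1, h2⟩ <;>
    rcases abs_cases (u.2 - v.2) with ⟨h3, h4⟩ | ⟨h3, h4⟩ <;> rw [h1, h3] <;> omega

private def xing (u v z : ℤ × ℤ) : ZMod 2 :=
  if u.1 = v.1 ∧ u.1 ≤ z.1 ∧ min u.2 v.2 = z.2 - 1 then 1 else 0

private def ind (z w : ℤ × ℤ) : ZMod 2 :=
  if w.1 ≤ z.1 ∧ w.2 = z.2 then 1 else 0

private lemma stepA {u v z : ℤ × ℤ} (h : Stp u v) (hu : u ≠ z) (hv : v ≠ z) :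
    xing u v z + xing u v (z.1, z.2 + 1) = ind z u + ind z v := by
  obtain ⟨ux, uy⟩ := u; obtain ⟨vx, vy⟩ := v; obtain ⟨zx, zy⟩ := z
  rw [stp_iff] at h
  simp only [ne_eq, Prod.mk.injEq, not_and] at hu hv
  simp only [xing, ind]
  split_ifs <;> first | decide | omega

private lemma stepB {u v z : ℤ × ℤ} (h : Stp u v) (hu : u ≠ (z.1 + 1, z.2))
    (hv : v ≠ (z.1 + 1, z.2)) :
    xing u v z = xing u v (z.1 + 1, z.2) := by
  obtain ⟨ux, uy⟩ := u; obtain ⟨vx, vy⟩ := v; obtain ⟨zx, zy⟩ := z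
  rw [stp_iff] at h
  simp only [ne_eq, Prod.mk.injEq, not_and] at hu hv
  simp only [xing]
  split_ifs <;> first | decide | omega

private lemma sum_tel (f : ℕ → ZMod 2) (m : ℕ) :
    ∑ k ∈ Finset.range m, (f k + f (k + 1)) = f 0 + f m := by
  induction m with
  | zero => simp [CharTwo.add_self_eq_zero]
  | succ m ih =>
    rw [Finset.sum_range_succ, ih]
    have h2 : f m + f m = 0 := CharTwo.add_self_eq_zero _
    linear_combination h2

private def par (p : ℕ → ℤ × ℤ) (m : ℕ) (z : ℤ × ℤ) : ZMod 2 :=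
  ∑ k ∈ Finset.range m, xing (p k) (p (k + 1)) z

private lemma parA {p : ℕ → ℤ × ℤ} {m : ℕ} (hw : ∀ k < m, Stp (p k) (p (k + 1)))
    (hcl : p m = p 0) {z : ℤ × ℤ} (hz : ∀ k ≤ m, p k ≠ z) :
    par p m z + par p m (z.1, z.2 + 1) = 0 := by
  unfold par
  rw [← Finset.sum_add_distrib]
  have : ∀ k ∈ Finset.range m, xing (p k) (p (k+1)) z + xing (p k) (p (k+1)) (z.1, z.2+1)
      = ind z (p k) + ind z (p (k+1)) := by
    intro k hk
    rw [Finset.mem_range] at hk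
    exact stepA (hw k hk) (hz k hk.le) (hz (k+1) hk)
  rw [Finset.sum_congr rfl this, sum_tel (fun k => ind z (p k)) m, hcl]
  exact CharTwo.add_self_eq_zero _

private lemma parB {p : ℕ → ℤ × ℤ} {m : ℕ} (hw : ∀ k < m, Stp (p k) (p (k + 1))) {z : ℤ × ℤ}
    (hz : ∀ k ≤ m, p k ≠ (z.1 + 1, z.2)) :
    par p m z = par p m (z.1 + 1, z.2) := by
  unfold par
  refine Finset.sum_congr rfl fun k hk => ?_
  rw [Finset.mem_range] at hk
  exact stepB (hw k hk) (hz k hk.le) (hz (k+1) hk)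

private lemma par_step_eq {p : ℕ → ℤ × ℤ} {m : ℕ} (hw : ∀ k < m, Stp (p k) (p (k + 1)))
    (hcl : p m = p 0) {z z' : ℤ × ℤ} (hs : Stp z z')
    (hz : ∀ k ≤ m, p k ≠ z) (hz' : ∀ k ≤ m, p k ≠ z') :
    par p m z = par p m z' := by
  rw [stp_iff] at hs
  rcases hs with ⟨h1, h2 | h2⟩ | ⟨h1, h2 | h2⟩
  · -- z.2 = z'.2 + 1 : z = (z'.1, z'.2+1)
    have hzz : z = (z'.1, z'.2 + 1) := Prod.ext h1 h2
    have := parA hw hcl hz'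
    rw [hzz]
    have h3 := eq_neg_of_add_eq_zero_left this
    rw [CharTwo.neg_eq] at h3
    exact h3.symm
  · have hzz : z' = (z.1, z.2 + 1) := Prod.ext h1.symm h2
    have := parA hw hcl hz
    rw [hzz]
    have h3 := eq_neg_of_add_eq_zero_left this
    rw [CharTwo.neg_eq] at h3
    exact h3
  · -- z.1 = z'.1 + 1 : z = (z'.1+1, z'.2)
    have hzz : z = (z'.1 + 1, z'.2) := Prod.ext h2 h1
    have := parB hw (z := z') (fun k hk => hzz ▸ hz k hk)
    rw [hzz]
    exact this.symm
  · have hzz : z' = (z.1 + 1, z.2) := Prod.ext h2 h1.symm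
    have := parB hw (z := z) (fun k hk => hzz ▸ hz' k hk)
    rw [hzz]
    exact this

private lemma par_walk_const {p : ℕ → ℤ × ℤ} {m : ℕ} (hw : ∀ k < m, Stp (p k) (p (k + 1)))
    (hcl : p m = p 0) (q : ℕ → ℤ × ℤ) (n : ℕ) (hq : ∀ l < n, Stp (q l) (q (l + 1)))
    (hdisj : ∀ l ≤ n, ∀ k ≤ m, p k ≠ q l) :
    par p m (q 0) = par p m (q n) := by
  induction n with
  | zero => rfl
  | succ n ih =>
    have h1 : par p m (q 0) = par p m (q n) :=
      ih (fun l hl => hq l (by omega)) (fun l hl => hdisj l (by omega))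
    rw [h1]
    exact par_step_eq hw hcl (hq n (by omega)) (hdisj n (by omega)) (hdisj (n+1) le_rfl)

private def cat (f g : ℕ → ℤ × ℤ) (a : ℕ) : ℕ → ℤ × ℤ :=
  fun k => if k < a then f k else g (k - a)

private lemma cat_eq_left {f g : ℕ → ℤ × ℤ} {a : ℕ} (hfg : f a = g 0) {k : ℕ} (hk : k ≤ a) :
    cat f g a k = f k := by
  unfold cat
  rcases lt_or_eq_of_le hk with h | h
  · rw [if_pos h]
  · subst h; rw [if_neg (lt_irrefl _), Nat.sub_self, hfg]

private lemma cat_eq_right {f g : ℕ → ℤ × ℤ} {a : ℕ} {k : ℕ} (hk : a ≤ k) :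
    cat f g a k = g (k - a) := by
  unfold cat
  rcases lt_or_eq_of_le hk with h | h
  · rw [if_neg (by omega)]
  · subst h; rw [if_neg (lt_irrefl _)]

private lemma cat_walk {f g : ℕ → ℤ × ℤ} {a b : ℕ}
    (hf : ∀ k < a, Stp (f k) (f (k + 1))) (hg : ∀ k < b, Stp (g k) (g (k + 1)))
    (hfg : f a = g 0) : ∀ k < a + b, Stp (cat f g a k) (cat f g a (k + 1)) := by
  intro k hk
  by_cases h : k < a
  · rw [cat_eq_left hfg h.le, cat_eq_left hfg (by omega)]
    exact hf k h
  · rw [cat_eq_right (by omega), cat_eq_right (by omega)]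
    have : k + 1 - a = (k - a) + 1 := by omega
    rw [this]
    exact hg (k - a) (by omega)

private lemma cat_par {f g : ℕ → ℤ × ℤ} {a b : ℕ} (hfg : f a = g 0) (z : ℤ × ℤ) :
    par (cat f g a) (a + b) z = par f a z + par g b z := by
  unfold par
  rw [Finset.sum_range_add]
  congr 1
  · refine Finset.sum_congr rfl fun k hk => ?_
    rw [Finset.mem_range] at hk
    rw [cat_eq_left hfg hk.le, cat_eq_left hfg (by omega)]
  · refine Finset.sum_congr rfl fun k hk => ?_
    rw [cat_eq_right (by omega), cat_eq_right (by omega)]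
    congr 2 <;> omega

private lemma cat_pred {f g : ℕ → ℤ × ℤ} {a b : ℕ} (P : (ℤ × ℤ) → Prop)
    (hf : ∀ k ≤ a, P (f k)) (hg : ∀ k ≤ b, P (g k)) :
    ∀ k ≤ a + b, P (cat f g a k) := by
  intro k hk
  by_cases h : k < a
  · unfold cat; rw [if_pos h]; exact hf k h.le
  · unfold cat; rw [if_neg h]; exact hg _ (by omega)

-- vanishing lemmas
private lemma par_zero_of_y_ge {p : ℕ → ℤ × ℤ} {m : ℕ} {c : ℤ}
    (h : ∀ k ≤ m, c ≤ (p k).2) {z : ℤ × ℤ} (hz : z.2 ≤ c) : par p m z = 0 := by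
  unfold par
  refine Finset.sum_eq_zero fun k hk => ?_
  rw [Finset.mem_range] at hk
  have h1 := h k hk.le
  have h2 := h (k+1) hk
  unfold xing
  rw [if_neg]
  intro ⟨_, _, hmin⟩
  omega

private lemma par_zero_of_y_le {p : ℕ → ℤ × ℤ} {m : ℕ}
    (hw : ∀ k < m, Stp (p k) (p (k + 1))) {c : ℤ}
    (h : ∀ k ≤ m, (p k).2 ≤ c) {z : ℤ × ℤ} (hz : c < z.2) : par p m z = 0 := by
  unfold par
  refine Finset.sum_eq_zero fun k hk => ?_
  rw [Finset.mem_range] at hk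
  have h1 := h k hk.le
  have h2 := h (k+1) hk
  have h3 := (stp_iff).mp (hw k hk)
  unfold xing
  rw [if_neg]
  intro ⟨hv, _, hmin⟩
  rcases h3 with ⟨_, h4⟩ | ⟨h4, h5⟩ <;> omega

private lemma par_zero_of_x_gt {p : ℕ → ℤ × ℤ} {m : ℕ} {z : ℤ × ℤ}
    (h : ∀ k ≤ m, z.1 < (p k).1) : par p m z = 0 := by
  unfold par
  refine Finset.sum_eq_zero fun k hk => ?_
  rw [Finset.mem_range] at hk
  have h1 := h k hk.le
  unfold xing
  rw [if_neg]
  intro ⟨_, hle, _⟩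
  omega

private lemma par_zero_of_horiz {p : ℕ → ℤ × ℤ} {m : ℕ}
    (hw : ∀ k < m, Stp (p k) (p (k + 1))) {c : ℤ}
    (h : ∀ k ≤ m, (p k).2 = c) (z : ℤ × ℤ) : par p m z = 0 := by
  unfold par
  refine Finset.sum_eq_zero fun k hk => ?_
  rw [Finset.mem_range] at hk
  have h1 := h k hk.le
  have h2 := h (k+1) hk
  have h3 := (stp_iff).mp (hw k hk)
  unfold xing
  rw [if_neg]
  intro ⟨hv, _, _⟩
  rcases h3 with ⟨_, h4⟩ | ⟨h4, h5⟩ <;> omega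

-- discrete intermediate value / trimming
private lemma trim_seq (f : ℕ → ℤ) (n : ℕ) (h1 : ∀ k < n, |f k - f (k + 1)| ≤ 1)
    {c d : ℤ} (hcd : c ≤ d) (h0 : f 0 ≤ c) (hn : d ≤ f n) :
    ∃ k1 k2, k1 ≤ k2 ∧ k2 ≤ n ∧ f k1 = c ∧ f k2 = d ∧
      ∀ k, k1 ≤ k → k ≤ k2 → c ≤ f k ∧ f k ≤ d := by
  have habs : ∀ k < n, f (k+1) ≤ f k + 1 ∧ f k ≤ f (k+1) + 1 := by
    intro k hk
    have := h1 k hk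
    have h2 := abs_le.mp this
    omega
  have hex : ∃ k, k ≤ n ∧ d ≤ f k := ⟨n, le_rfl, hn⟩
  classical
  obtain ⟨k2, hk2n, hk2d, hk2min⟩ :
      ∃ k2, k2 ≤ n ∧ d ≤ f k2 ∧ ∀ k < k2, ¬ d ≤ f k := by
    refine ⟨Nat.find hex, (Nat.find_spec hex).1, (Nat.find_spec hex).2, fun k hk hd => ?_⟩
    exact Nat.find_min hex hk ⟨by have := (Nat.find_spec hex).1; omega, hd⟩
  have hfk2 : f k2 = d := by
    rcases Nat.eq_zero_or_pos k2 with h | h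
    · have h0' : f k2 = f 0 := by rw [h]
      omega
    · have h6 := hk2min (k2 - 1) (by omega)
      have h7 := habs (k2 - 1) (by omega)
      have h8 : k2 - 1 + 1 = k2 := by omega
      rw [h8] at h7
      omega
  obtain ⟨k1, hk1le, hk1P, hk1max⟩ :
      ∃ k1, k1 ≤ k2 ∧ f k1 ≤ c ∧ ∀ k, k1 < k → k ≤ k2 → ¬ f k ≤ c := by
    refine ⟨Nat.findGreatest (fun k => f k ≤ c) k2, Nat.findGreatest_le k2,
      by simpa using Nat.findGreatest_spec (P := fun k => f k ≤ c) (Nat.zero_le k2) h0,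
      fun k hk hk' => Nat.findGreatest_is_greatest hk hk'⟩
  have hfk1 : f k1 = c := by
    rcases lt_or_eq_of_le hk1le with h | h
    · have h5 := hk1max (k1 + 1) (by omega) (by omega)
      have h7 := habs k1 (by omega)
      omega
    · have : f k1 = f k2 := by rw [h]
      omega
  refine ⟨k1, k2, hk1le, hk2n, hfk1, hfk2, fun k hka hkb => ?_⟩
  constructor
  · rcases lt_or_eq_of_le hka with h | h
    · have := hk1max k h hkb; omega
    · have : f k = f k1 := by rw [h]
      omega
  · rcases lt_or_eq_of_le hkb with h | h
    · have := hk2min k h; omega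
    · have : f k = f k2 := by rw [h]
      omega

private lemma stp_dxy {u v : ℤ × ℤ} (h : Stp u v) :
    |u.1 - v.1| ≤ 1 ∧ |u.2 - v.2| ≤ 1 := by
  rw [stp_iff] at h
  constructor <;> rw [abs_le] <;> omega

private def segR (x y : ℤ) : ℕ → ℤ × ℤ := fun k => (x + (k : ℤ), y)
private def segL (x y : ℤ) : ℕ → ℤ × ℤ := fun k => (x - (k : ℤ), y)
private def segU (x y : ℤ) : ℕ → ℤ × ℤ := fun k => (x, y + (k : ℤ))
private def segD (x y : ℤ) : ℕ → ℤ × ℤ := fun k => (x, y - (k : ℤ))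

private lemma segR_stp (x y : ℤ) : ∀ k, Stp (segR x y k) (segR x y (k + 1)) := by
  intro k; rw [stp_iff]; dsimp [segR]; push_cast; omega
private lemma segL_stp (x y : ℤ) : ∀ k, Stp (segL x y k) (segL x y (k + 1)) := by
  intro k; rw [stp_iff]; dsimp [segL]; push_cast; omega
private lemma segU_stp (x y : ℤ) : ∀ k, Stp (segU x y k) (segU x y (k + 1)) := by
  intro k; rw [stp_iff]; dsimp [segU]; push_cast; omega
private lemma segD_stp (x y : ℤ) : ∀ k, Stp (segD x y k) (segD x y (k + 1)) := by
  intro k; rw [stp_iff]; dsimp [segD]; push_cast; omega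

private def GoodPt (m : ℕ) (H : ℕ → ℤ × ℤ) (a1 a2 b1 b2 : ℤ) (w : ℤ × ℤ) : Prop :=
  ((∃ j, j ≤ m ∧ w = H j) ∨ w.1 = a1 - 1 ∨ w.1 = a2 + 1 ∨ w.2 = b1 - 1) ∧ w.2 ≤ b2

private lemma cross_meet {a1 a2 b1 b2 : ℤ} {H V : ℕ → ℤ × ℤ} {m n : ℕ}
    (hHw : ∀ k < m, Stp (H k) (H (k + 1)))
    (hHy : ∀ k ≤ m, b1 ≤ (H k).2 ∧ (H k).2 ≤ b2)
    (hH0 : (H 0).1 ≤ a1) (hHm : a2 ≤ (H m).1)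
    (hVw : ∀ l < n, Stp (V l) (V (l + 1)))
    (hVx : ∀ l ≤ n, a1 ≤ (V l).1 ∧ (V l).1 ≤ a2)
    (hV0 : (V 0).2 ≤ b1) (hVn : b2 ≤ (V n).2) :
    ∃ k l, k ≤ m ∧ l ≤ n ∧ H k = V l := by
  by_contra hcon
  push_neg at hcon
  have ha12 : a1 ≤ a2 := le_trans (hVx 0 (Nat.zero_le n)).1 (hVx 0 (Nat.zero_le n)).2
  have hb12 : b1 ≤ b2 := le_trans (hHy 0 (Nat.zero_le m)).1 (hHy 0 (Nat.zero_le m)).2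
  -- trim the horizontal path
  obtain ⟨k1, k2, hk12, hk2m, hP0, hPM, hPx⟩ :=
    trim_seq (fun k => (H k).1) m (fun k hk => (stp_dxy (hHw k hk)).1) ha12 hH0 hHm
  -- trim the vertical path
  obtain ⟨l1, l2, hl12, hl2n, hQ0, hQN, hQy⟩ :=
    trim_seq (fun l => (V l).2) n (fun l hl => (stp_dxy (hVw l hl)).2) hb12 hV0 hVn

  set M0 : ℕ := k2 - k1 with hM0def
  set N0 : ℕ := l2 - l1 with hN0def
  have hk2eq : k1 + M0 = k2 := by omega
  have hl2eq : l1 + N0 = l2 := by omega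
  set P : ℕ → ℤ × ℤ := fun k => H (k1 + k) with hPdef
  have hPMa : (P M0).1 = a2 := by rw [hPdef]; dsimp only; rw [hk2eq]; exact hPM
  have hP0a : (P 0).1 = a1 := by rw [hPdef]; dsimp only; exact hP0
  set y0 : ℤ := (H k1).2 with hy0def
  set ym : ℤ := (H k2).2 with hymdef
  have hP0e : P 0 = (a1, y0) := Prod.ext hP0a rfl
  have hPMe : P M0 = (a2, ym) := by
    refine Prod.ext hPMa ?_
    rw [hPdef]; dsimp only; rw [hk2eq]
  have hPy : ∀ k ≤ M0, b1 ≤ (P k).2 ∧ (P k).2 ≤ b2 := fun k hk => hHy (k1 + k) (by omega)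
  have hPxr : ∀ k ≤ M0, a1 ≤ (P k).1 ∧ (P k).1 ≤ a2 := fun k hk =>
    hPx (k1 + k) (by omega) (by omega)
  have hy0b : b1 ≤ y0 ∧ y0 ≤ b2 := by
    have := hPy 0 (Nat.zero_le _); rw [hPdef] at this; exact this
  have hymb : b1 ≤ ym ∧ ym ≤ b2 := by
    have := hPy M0 le_rfl
    rw [hPdef] at this; dsimp only at this; rw [hk2eq] at this; exact this
  have hPw : ∀ k < M0, Stp (P k) (P (k + 1)) := by
    intro k hk
    have h := hHw (k1 + k) (by omega)
    have e : k1 + (k + 1) = (k1 + k) + 1 := by omega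
    rw [hPdef]; dsimp only; rw [e]; exact h
  -- lengths of the closing segments
  set U : ℕ := (y0 - b1 + 1).toNat with hUdef
  set D : ℕ := (ym - b1 + 1).toNat with hDdef
  set L : ℕ := (a2 - a1 + 2).toNat with hLdef
  have hU : (U : ℤ) = y0 - b1 + 1 := Int.toNat_of_nonneg (by omega)
  have hD : (D : ℤ) = ym - b1 + 1 := Int.toNat_of_nonneg (by omega)
  have hL : (L : ℤ) = a2 - a1 + 2 := Int.toNat_of_nonneg (by omega)
  have hU1 : 1 ≤ U := by omega
  have hD1 : 1 ≤ D := by omega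
  have hL1 : 1 ≤ L := by omega
  -- the five closing segments
  set S1 : ℕ → ℤ × ℤ := segR a2 ym with hS1def
  set S2 : ℕ → ℤ × ℤ := segD (a2 + 1) ym with hS2def
  set S3 : ℕ → ℤ × ℤ := segL (a2 + 1) (b1 - 1) with hS3def
  set S4 : ℕ → ℤ × ℤ := segU (a1 - 1) (b1 - 1) with hS4def
  set S5 : ℕ → ℤ × ℤ := segR (a1 - 1) y0 with hS5def
  -- interface equalities
  have i45 : S4 U = S5 0 := by
    rw [hS4def, hS5def]; dsimp [segU, segR]; exact Prod.ext (by push_cast; ring) (by omega)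
  have i34 : S3 L = cat S4 S5 U 0 := by
    rw [cat_eq_left i45 (Nat.zero_le U), hS3def, hS4def]; dsimp [segL, segU]
    exact Prod.ext (by omega) (by push_cast; ring)
  have i23 : S2 D = cat S3 (cat S4 S5 U) L 0 := by
    rw [cat_eq_left i34 (Nat.zero_le L), hS2def, hS3def]; dsimp [segD, segL]
    exact Prod.ext (by push_cast; omega) (by omega)
  have i12 : S1 1 = cat S2 (cat S3 (cat S4 S5 U) L) D 0 := by
    rw [cat_eq_left i23 (Nat.zero_le D), hS1def, hS2def]; dsimp [segR, segD]
    exact Prod.ext (by push_cast; ring) (by push_cast; ring)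
  have iP1 : P M0 = cat S1 (cat S2 (cat S3 (cat S4 S5 U) L) D) 1 0 := by
    rw [cat_eq_left i12 (Nat.zero_le 1), hPMe, hS1def]; dsimp [segR]
    exact Prod.ext (by push_cast; ring) rfl
  -- the closed walk C
  set C : ℕ → ℤ × ℤ := cat P (cat S1 (cat S2 (cat S3 (cat S4 S5 U) L) D) 1) M0 with hCdef
  set M : ℕ := M0 + (1 + (D + (L + (U + 1)))) with hMdef
  have hCw : ∀ k < M, Stp (C k) (C (k + 1)) := by
    rw [hCdef, hMdef]
    exact cat_walk hPw
      (cat_walk (fun k _ => segR_stp a2 ym k)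
        (cat_walk (fun k _ => segD_stp (a2 + 1) ym k)
          (cat_walk (fun k _ => segL_stp (a2 + 1) (b1 - 1) k)
            (cat_walk (fun k _ => segU_stp (a1 - 1) (b1 - 1) k)
              (fun k _ => segR_stp (a1 - 1) y0 k) i45) i34) i23) i12) iP1
  have hC0 : C 0 = P 0 := by rw [hCdef]; exact cat_eq_left iP1 (Nat.zero_le M0)
  have hCM : C M = P 0 := by
    rw [hCdef, hMdef]
    rw [cat_eq_right (by omega)]
    rw [show M0 + (1 + (D + (L + (U + 1)))) - M0 = 1 + (D + (L + (U + 1))) from by omega]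
    rw [cat_eq_right (by omega)]
    rw [show 1 + (D + (L + (U + 1))) - 1 = D + (L + (U + 1)) from by omega]
    rw [cat_eq_right (by omega)]
    rw [show D + (L + (U + 1)) - D = L + (U + 1) from by omega]
    rw [cat_eq_right (by omega)]
    rw [show L + (U + 1) - L = U + 1 from by omega]
    rw [cat_eq_right (by omega)]
    rw [show U + 1 - U = 1 from by omega]
    rw [hS5def, hP0e]; dsimp [segR]
    exact Prod.ext (by push_cast; ring) rfl
  have hCcl : C M = C 0 := by rw [hC0, hCM]
  -- properties of the vertices of C
  have hCpred : ∀ k ≤ M, GoodPt m H a1 a2 b1 b2 (C k) := by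
    rw [hCdef, hMdef]
    unfold GoodPt
    refine cat_pred (GoodPt m H a1 a2 b1 b2)
      (fun k hk => ⟨Or.inl ⟨k1 + k, by omega, rfl⟩, (hPy k hk).2⟩) ?_
    refine cat_pred (GoodPt m H a1 a2 b1 b2) (fun k hk => ?_) ?_
    · -- S1, k ≤ 1
      interval_cases k
      · refine ⟨Or.inl ⟨k2, by omega, ?_⟩, ?_⟩
        · rw [hS1def]; dsimp [segR]
          exact Prod.ext (by rw [hPM]; push_cast; ring) rfl
        · rw [hS1def]; dsimp [segR]; exact hymb.2
      · rw [hS1def]; dsimp [segR]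
        exact ⟨Or.inr (Or.inr (Or.inl (by push_cast; ring))), hymb.2⟩
    refine cat_pred (GoodPt m H a1 a2 b1 b2) (fun k hk => ?_) ?_
    · -- S2
      rw [hS2def]; dsimp [segD]
      exact ⟨Or.inr (Or.inr (Or.inl rfl)), by omega⟩
    refine cat_pred (GoodPt m H a1 a2 b1 b2) (fun k hk => ?_) ?_
    · -- S3
      rw [hS3def]; dsimp [segL]
      exact ⟨Or.inr (Or.inr (Or.inr rfl)), by omega⟩
    refine cat_pred (GoodPt m H a1 a2 b1 b2) (fun k hk => ?_) ?_
    · -- S4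
      rw [hS4def]; dsimp [segU]
      refine ⟨Or.inr (Or.inl rfl), ?_⟩
      have : (k : ℤ) ≤ (U : ℤ) := by exact_mod_cast hk
      omega
    · -- S5, k ≤ 1
      intro k hk
      interval_cases k
      · rw [hS5def]; dsimp [segR]
        exact ⟨Or.inr (Or.inl (by push_cast; ring)), by omega⟩
      · refine ⟨Or.inl ⟨k1, by omega, ?_⟩, ?_⟩
        · rw [hS5def]; dsimp [segR]
          exact Prod.ext (by rw [hP0]; push_cast; ring) rfl
        · rw [hS5def]; dsimp [segR]; omega
  -- the vertical path, trimmed and extended one step above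
  set Q : ℕ → ℤ × ℤ := fun l => if l ≤ N0 then V (l1 + l) else ((V l2).1, b2 + 1) with hQdef
  have hQw : ∀ l < N0 + 1, Stp (Q l) (Q (l + 1)) := by
    intro l hl
    rw [hQdef]; dsimp only
    rcases Nat.lt_or_ge l N0 with h | h
    · rw [if_pos (by omega), if_pos (by omega)]
      have hs := hVw (l1 + l) (by omega)
      have e : l1 + (l + 1) = (l1 + l) + 1 := by omega
      rw [e]; exact hs
    · have hlN : l = N0 := by omega
      subst hlN
      rw [if_pos le_rfl, if_neg (by omega)]
      rw [stp_iff]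
      refine Or.inl ⟨by rw [hl2eq], Or.inr ?_⟩
      dsimp only
      rw [hl2eq]
      rw [hQN]
  have hQdisj : ∀ l ≤ N0 + 1, ∀ k ≤ M, C k ≠ Q l := by
    intro l hl k hk heq
    obtain ⟨hp1, hp2⟩ := hCpred k hk
    rw [hQdef] at heq; dsimp only at heq
    rcases Nat.lt_or_ge N0 l with h | h
    · rw [if_neg (by omega)] at heq
      rw [heq] at hp2; dsimp only at hp2; omega
    · rw [if_pos h] at heq
      have hx := hVx (l1 + l) (by omega)
      have hy := hQy (l1 + l) (by omega) (by omega)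
      rcases hp1 with ⟨j, hj, hw⟩ | hx1 | hx1 | hy1
      · exact hcon j (l1 + l) hj (by omega) (hw ▸ heq)
      · rw [heq] at hx1; omega
      · rw [heq] at hx1; omega
      · rw [heq] at hy1; omega
  -- parity is constant along Q
  have hinv : par C M (Q 0) = par C M (Q (N0 + 1)) :=
    par_walk_const hCw hCcl Q (N0 + 1) hQw hQdisj
  -- evaluate parity at the two ends
  have hQ0e : Q 0 = ((V l1).1, b1) := by
    rw [hQdef]; dsimp only; rw [if_pos (Nat.zero_le N0)]
    exact Prod.ext rfl hQ0
  have hQtope : Q (N0 + 1) = ((V l2).1, b2 + 1) := by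
    rw [hQdef]; dsimp only; rw [if_neg (by omega)]
  have hx1b : a1 ≤ (V l1).1 ∧ (V l1).1 ≤ a2 := hVx l1 (by omega)
  have htop : par C M (Q (N0 + 1)) = 0 := by
    rw [hQtope]
    exact par_zero_of_y_le hCw (fun k hk => (hCpred k hk).2) (by dsimp only; omega)
  have hbot : par C M (Q 0) = 1 := by
    rw [hQ0e, hCdef, hMdef]
    rw [cat_par iP1, cat_par i12, cat_par i23, cat_par i34, cat_par i45]
    have e1 : par P M0 ((V l1).1, b1) = 0 :=
      par_zero_of_y_ge (fun k hk => (hPy k hk).1) (by dsimp only; omega)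
    have e2 : par S1 1 ((V l1).1, b1) = 0 :=
      par_zero_of_horiz (fun k _ => segR_stp a2 ym k) (fun k _ => rfl) _
    have e3 : par S2 D ((V l1).1, b1) = 0 := by
      refine par_zero_of_x_gt (fun k hk => ?_)
      rw [hS2def]; dsimp [segD]; omega
    have e4 : par S3 L ((V l1).1, b1) = 0 :=
      par_zero_of_horiz (fun k _ => segL_stp (a2 + 1) (b1 - 1) k) (fun k _ => rfl) _
    have e6 : par S5 1 ((V l1).1, b1) = 0 :=
      par_zero_of_horiz (fun k _ => segR_stp (a1 - 1) y0 k) (fun k _ => rfl) _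
    have e5 : par S4 U ((V l1).1, b1) = 1 := by
      unfold par
      have hterm : ∀ k ∈ Finset.range U,
          xing (S4 k) (S4 (k + 1)) ((V l1).1, b1) = if k = 0 then 1 else 0 := by
        intro k hk
        rw [hS4def]; unfold xing segU; dsimp only
        by_cases hk0 : k = 0
        · subst hk0
          rw [if_pos ⟨rfl, by omega, by push_cast; omega⟩, if_pos rfl]
        · rw [if_neg, if_neg hk0]
          rintro ⟨-, -, hmin⟩
          have : (1 : ℤ) ≤ (k : ℤ) := by exact_mod_cast Nat.one_le_iff_ne_zero.mpr hk0
          push_cast at hmin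
          omega
      rw [Finset.sum_congr rfl hterm, Finset.sum_ite_eq' (Finset.range U) 0 (fun _ => (1 : ZMod 2))]
      rw [if_pos (Finset.mem_range.mpr (by omega))]
    rw [e1, e2, e3, e4, e5, e6]
    decide
  rw [hbot, htop] at hinv
  exact absurd hinv (by decide)

private lemma ro_adj {ω : Set (Sym2 (ℤ × ℤ))} {R : Set (ℤ × ℤ)} {x y : ℤ × ℤ}
    (h : (restrictedOpen ω R).Adj x y) : Stp x y ∧ x ∈ R ∧ y ∈ R := by
  rw [restrictedOpen, SimpleGraph.fromRel_adj] at h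
  obtain ⟨-, h | h⟩ := h
  · exact ⟨h.1, h.2.2⟩
  · exact ⟨latticeGraph.adj_symm h.1, h.2.2.2, h.2.2.1⟩

private lemma ro_le_road (ω : Set (Sym2 (ℤ × ℤ))) (Rs : ℕ → Set (ℤ × ℤ)) (i : ℕ) :
    restrictedOpen ω (Rs i) ≤ roadGraph ω Rs := by
  intro x y h
  rw [restrictedOpen, SimpleGraph.fromRel_adj] at h
  rw [roadGraph, SimpleGraph.fromRel_adj]
  obtain ⟨hne, h | h⟩ := h
  · exact ⟨hne, Or.inl ⟨h.1, h.2.1, i, h.2.2⟩⟩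
  · exact ⟨hne, Or.inr ⟨h.1, h.2.1, i, h.2.2⟩⟩

private lemma walk_stp_mem {ω : Set (Sym2 (ℤ × ℤ))} {R : Set (ℤ × ℤ)} {u v : ℤ × ℤ}
    (hv : v ∈ R) (W : (restrictedOpen ω R).Walk u v) :
    (∀ k < W.length, Stp (W.getVert k) (W.getVert (k + 1))) ∧
    (∀ k ≤ W.length, W.getVert k ∈ R) := by
  have hadj : ∀ k < W.length,
      (restrictedOpen ω R).Adj (W.getVert k) (W.getVert (k + 1)) :=
    fun k hk => W.adj_getVert_succ hk
  refine ⟨fun k hk => (ro_adj (hadj k hk)).1, fun k hk => ?_⟩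
  rcases lt_or_eq_of_le hk with h | h
  · exact (ro_adj (hadj k h)).2.1
  · rw [h, SimpleGraph.Walk.getVert_length]; exact hv

private lemma walk_reach {G : SimpleGraph (ℤ × ℤ)} {u v : ℤ × ℤ} (W : G.Walk u v) :
    ∀ k, G.Reachable u (W.getVert k) := by
  intro k
  induction k with
  | zero => rw [SimpleGraph.Walk.getVert_zero]
  | succ k ih =>
    rcases Nat.lt_or_ge k W.length with h | h
    · exact ih.trans (W.adj_getVert_succ h).reachable
    · rw [W.getVert_of_length_le (by omega)]
      rw [W.getVert_of_length_le h] at ih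
      exact ih

/-- If `(Rᵢ)` is a sequence of rectangles, alternately well-joined in a
vertical-to-horizontal and in a horizontal-to-vertical way, with unbounded side lengths,
and `ω` is a configuration crossing each even-indexed rectangle vertically and each
odd-indexed rectangle horizontally, then the graph of `ω`-open edges lying in a common
rectangle has an infinite connected component. -/
theorem road_has_infinite_component (A B : ℕ → Set ℤ)
    (hA : ∀ i, IsBlock (A i)) (hB : ∀ i, IsBlock (B i))
    (hjoinE : ∀ i, Even i → A i ⊂ A (i + 1) ∧ B (i + 1) ⊂ B i)
    (hjoinO : ∀ i, Odd i → B i ⊂ B (i + 1) ∧ A (i + 1) ⊂ A i)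
    (hunb : ∀ N : ℕ, ∃ i, N ≤ (A i).ncard ∨ N ≤ (B i).ncard)
    (ω : Set (Sym2 (ℤ × ℤ)))
    (hcrossE : ∀ i, Even i → HasCrossV ω (A i ×ˢ B i))
    (hcrossO : ∀ i, Odd i → HasCrossH ω (A i ×ˢ B i)) :
    ∃ x ∈ ⋃ i, A i ×ˢ B i,
      {y | (roadGraph ω (fun i => A i ×ˢ B i)).Reachable y x}.Infinite := by
  classical
  set G := roadGraph ω (fun i => A i ×ˢ B i) with hG
  choose a b hab hAeq using hA
  choose c d hcd hBeq using hB
  -- unified crossing data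
  have hcross : ∀ i, ∃ u v : ℤ × ℤ, u ∈ A i ×ˢ B i ∧ v ∈ A i ×ˢ B i ∧
      (restrictedOpen ω (A i ×ˢ B i)).Reachable u v ∧
      ((¬ Odd i ∧ (∀ w ∈ A i ×ˢ B i, u.2 ≤ w.2) ∧ (∀ w ∈ A i ×ˢ B i, w.2 ≤ v.2)) ∨
       (Odd i ∧ (∀ w ∈ A i ×ˢ B i, u.1 ≤ w.1) ∧ (∀ w ∈ A i ×ˢ B i, w.1 ≤ v.1))) := by
    intro i
    rcases Nat.even_or_odd i with he | ho
    · obtain ⟨u, v, h1, h2, h3, h4, h5⟩ := hcrossE i he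
      exact ⟨u, v, h1, h2, h5, Or.inl ⟨Nat.not_odd_iff_even.mpr he, h3, h4⟩⟩
    · obtain ⟨u, v, h1, h2, h3, h4, h5⟩ := hcrossO i ho
      exact ⟨u, v, h1, h2, h5, Or.inr ⟨ho, h3, h4⟩⟩
  choose uu vv huu hvv hre hex using hcross
  -- membership facts
  have hmem1 : ∀ i, ∀ w ∈ A i ×ˢ B i,
      (a i ≤ w.1 ∧ w.1 ≤ b i) ∧ (c i ≤ w.2 ∧ w.2 ≤ d i) := by
    intro i w hw
    obtain ⟨h1, h2⟩ := hw
    rw [hAeq i, Set.mem_Icc] at h1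
    rw [hBeq i, Set.mem_Icc] at h2
    exact ⟨h1, h2⟩
  have hmk : ∀ i (x y : ℤ), a i ≤ x → x ≤ b i → c i ≤ y → y ≤ d i →
      ((x, y) : ℤ × ℤ) ∈ A i ×ˢ B i := by
    intro i x y h1 h2 h3 h4
    refine ⟨?_, ?_⟩
    · rw [hAeq i]; exact Set.mem_Icc.mpr ⟨h1, h2⟩
    · rw [hBeq i]; exact Set.mem_Icc.mpr ⟨h3, h4⟩
  -- the chain of crossings
  have hlink : ∀ i, G.Reachable (uu i) (uu (i + 1)) := by
    intro i
    obtain ⟨W1⟩ := hre i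
    obtain ⟨W2⟩ := hre (i + 1)
    obtain ⟨hW1s, hW1m⟩ := walk_stp_mem (hvv i) W1
    obtain ⟨hW2s, hW2m⟩ := walk_stp_mem (hvv (i + 1)) W2
    rcases Nat.even_or_odd i with he | ho
    · -- even: W1 vertical crossing of R i, W2 horizontal crossing of R (i+1)
      rcases hex i with ⟨-, humin, hvmax⟩ | ⟨ho', -⟩
      swap
      · exact absurd ho' (Nat.not_odd_iff_even.mpr he)
      rcases hex (i + 1) with ⟨hno, -, -⟩ | ⟨-, humin', hvmax'⟩
      · exact absurd he.add_one hno
      -- A i ⊆ A (i+1), B (i+1) ⊆ B i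
      have hsubA : ∀ x, a i ≤ x → x ≤ b i → a (i+1) ≤ x ∧ x ≤ b (i+1) := by
        intro x h1 h2
        have := (hjoinE i he).1.subset (by rw [hAeq i]; exact Set.mem_Icc.mpr ⟨h1, h2⟩)
        rw [hAeq (i+1), Set.mem_Icc] at this; exact this
      have hsubB : ∀ y, c (i+1) ≤ y → y ≤ d (i+1) → c i ≤ y ∧ y ≤ d i := by
        intro y h1 h2
        have := (hjoinE i he).2.subset (by rw [hBeq (i+1)]; exact Set.mem_Icc.mpr ⟨h1, h2⟩)
        rw [hBeq i, Set.mem_Icc] at this; exact this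
      have hcB : c i ≤ c (i+1) ∧ c (i+1) ≤ d i := by
        have := hsubB (c (i+1)) le_rfl (hcd (i+1)); omega
      have hdB : c i ≤ d (i+1) ∧ d (i+1) ≤ d i := by
        have := hsubB (d (i+1)) (hcd (i+1)) le_rfl; omega
      have haA : a (i+1) ≤ a i ∧ a i ≤ b (i+1) := by
        have := hsubA (a i) le_rfl (hab i); omega
      have hbA : a (i+1) ≤ b i ∧ b i ≤ b (i+1) := by
        have := hsubA (b i) (hab i) le_rfl; omega
      obtain ⟨k, l, hk, hl, heq⟩ := cross_meet (a1 := a i) (a2 := b i)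
        (b1 := c (i+1)) (b2 := d (i+1))
        (H := W2.getVert) (V := W1.getVert) (m := W2.length) (n := W1.length)
        hW2s
        (fun k hk => (hmem1 (i+1) _ (hW2m k hk)).2)
        (by rw [SimpleGraph.Walk.getVert_zero]
            exact humin' (a i, c (i+1)) (hmk (i+1) _ _ haA.1 haA.2 le_rfl (hcd (i+1))))
        (by rw [SimpleGraph.Walk.getVert_length]
            exact hvmax' (b i, c (i+1)) (hmk (i+1) _ _ hbA.1 hbA.2 le_rfl (hcd (i+1))))
        hW1s
        (fun l hl => (hmem1 i _ (hW1m l hl)).1)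
        (by rw [SimpleGraph.Walk.getVert_zero]
            exact humin (a i, c (i+1)) (hmk i _ _ le_rfl (hab i) hcB.1 hcB.2))
        (by rw [SimpleGraph.Walk.getVert_length]
            exact hvmax (a i, d (i+1)) (hmk i _ _ le_rfl (hab i) hdB.1 hdB.2))
      have r1 : G.Reachable (uu i) (W1.getVert l) :=
        (walk_reach W1 l).mono (ro_le_road ω (fun i => A i ×ˢ B i) i)
      have r2 : G.Reachable (uu (i+1)) (W2.getVert k) :=
        (walk_reach W2 k).mono (ro_le_road ω (fun i => A i ×ˢ B i) (i+1))
      exact r1.trans ((heq ▸ r2).symm)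
    · -- odd: W1 horizontal crossing of R i, W2 vertical crossing of R (i+1)
      rcases hex i with ⟨hno, -, -⟩ | ⟨-, humin, hvmax⟩
      · exact absurd ho hno
      rcases hex (i + 1) with ⟨-, humin', hvmax'⟩ | ⟨ho', -⟩
      swap
      · exact absurd ho' (Nat.not_odd_iff_even.mpr ho.add_one)
      have hsubA : ∀ x, a (i+1) ≤ x → x ≤ b (i+1) → a i ≤ x ∧ x ≤ b i := by
        intro x h1 h2
        have := (hjoinO i ho).2.subset (by rw [hAeq (i+1)]; exact Set.mem_Icc.mpr ⟨h1, h2⟩)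
        rw [hAeq i, Set.mem_Icc] at this; exact this
      have hsubB : ∀ y, c i ≤ y → y ≤ d i → c (i+1) ≤ y ∧ y ≤ d (i+1) := by
        intro y h1 h2
        have := (hjoinO i ho).1.subset (by rw [hBeq i]; exact Set.mem_Icc.mpr ⟨h1, h2⟩)
        rw [hBeq (i+1), Set.mem_Icc] at this; exact this
      have hcB : c (i+1) ≤ c i ∧ c i ≤ d (i+1) := by
        have := hsubB (c i) le_rfl (hcd i); omega
      have hdB : c (i+1) ≤ d i ∧ d i ≤ d (i+1) := by
        have := hsubB (d i) (hcd i) le_rfl; omega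
      have haA : a i ≤ a (i+1) ∧ a (i+1) ≤ b i := by
        have := hsubA (a (i+1)) le_rfl (hab (i+1)); omega
      have hbA : a i ≤ b (i+1) ∧ b (i+1) ≤ b i := by
        have := hsubA (b (i+1)) (hab (i+1)) le_rfl; omega
      obtain ⟨k, l, hk, hl, heq⟩ := cross_meet (a1 := a (i+1)) (a2 := b (i+1))
        (b1 := c i) (b2 := d i)
        (H := W1.getVert) (V := W2.getVert) (m := W1.length) (n := W2.length)
        hW1s
        (fun k hk => (hmem1 i _ (hW1m k hk)).2)
        (by rw [SimpleGraph.Walk.getVert_zero]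
            exact humin (a (i+1), c i) (hmk i _ _ haA.1 haA.2 le_rfl (hcd i)))
        (by rw [SimpleGraph.Walk.getVert_length]
            exact hvmax (b (i+1), c i) (hmk i _ _ hbA.1 hbA.2 le_rfl (hcd i)))
        hW2s
        (fun l hl => (hmem1 (i+1) _ (hW2m l hl)).1)
        (by rw [SimpleGraph.Walk.getVert_zero]
            exact humin' (a (i+1), c i) (hmk (i+1) _ _ le_rfl (hab (i+1)) hcB.1 hcB.2))
        (by rw [SimpleGraph.Walk.getVert_length]
            exact hvmax' (a (i+1), d i) (hmk (i+1) _ _ le_rfl (hab (i+1)) hdB.1 hdB.2))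
      have r1 : G.Reachable (uu i) (W1.getVert k) :=
        (walk_reach W1 k).mono (ro_le_road ω (fun i => A i ×ˢ B i) i)
      have r2 : G.Reachable (uu (i+1)) (W2.getVert l) :=
        (walk_reach W2 l).mono (ro_le_road ω (fun i => A i ×ˢ B i) (i+1))
      exact (heq ▸ r1).trans r2.symm
  have hchain : ∀ i, G.Reachable (uu 0) (uu i) := by
    intro i
    induction i with
    | zero => rfl
    | succ i ih => exact ih.trans (hlink i)
  refine ⟨uu 0, Set.mem_iUnion.mpr ⟨0, huu 0⟩, ?_⟩
  set Y : Set (ℤ × ℤ) := {y | G.Reachable y (uu 0)} with hY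
  by_contra hinf
  rw [Set.not_infinite] at hinf
  have hcovH : ∀ j, Odd j → Set.Icc (a j) (b j) ⊆ Prod.fst '' Y := by
    intro j hj x0 hx0
    rw [Set.mem_Icc] at hx0
    rcases hex j with ⟨hno, -, -⟩ | ⟨-, humin, hvmax⟩
    · exact absurd hj hno
    obtain ⟨W⟩ := hre j
    obtain ⟨hWs, hWm⟩ := walk_stp_mem (hvv j) W
    have h0 : (W.getVert 0).1 ≤ x0 := by
      rw [SimpleGraph.Walk.getVert_zero]
      exact humin (x0, c j) (hmk j _ _ hx0.1 hx0.2 le_rfl (hcd j))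
    have hn : x0 ≤ (W.getVert W.length).1 := by
      rw [SimpleGraph.Walk.getVert_length]
      exact hvmax (x0, c j) (hmk j _ _ hx0.1 hx0.2 le_rfl (hcd j))
    obtain ⟨q1, q2, -, -, hfq1, -, -⟩ := trim_seq (fun k => (W.getVert k).1) W.length
      (fun k hk => (stp_dxy (hWs k hk)).1) (le_refl x0) h0 hn
    refine ⟨W.getVert q1, ?_, hfq1⟩
    have hr : G.Reachable (uu j) (W.getVert q1) :=
      (walk_reach W q1).mono (ro_le_road ω (fun i => A i ×ˢ B i) j)
    exact hr.symm.trans (hchain j).symm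
  have hcovV : ∀ j, Even j → Set.Icc (c j) (d j) ⊆ Prod.snd '' Y := by
    intro j hj y0 hy0
    rw [Set.mem_Icc] at hy0
    rcases hex j with ⟨-, humin, hvmax⟩ | ⟨ho', -⟩
    swap
    · exact absurd ho' (Nat.not_odd_iff_even.mpr hj)
    obtain ⟨W⟩ := hre j
    obtain ⟨hWs, hWm⟩ := walk_stp_mem (hvv j) W
    have h0 : (W.getVert 0).2 ≤ y0 := by
      rw [SimpleGraph.Walk.getVert_zero]
      exact humin (a j, y0) (hmk j _ _ le_rfl (hab j) hy0.1 hy0.2)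
    have hn : y0 ≤ (W.getVert W.length).2 := by
      rw [SimpleGraph.Walk.getVert_length]
      exact hvmax (a j, y0) (hmk j _ _ le_rfl (hab j) hy0.1 hy0.2)
    obtain ⟨q1, q2, -, -, hfq1, -, -⟩ := trim_seq (fun k => (W.getVert k).2) W.length
      (fun k hk => (stp_dxy (hWs k hk)).2) (le_refl y0) h0 hn
    refine ⟨W.getVert q1, ?_, hfq1⟩
    have hr : G.Reachable (uu j) (W.getVert q1) :=
      (walk_reach W q1).mono (ro_le_road ω (fun i => A i ×ˢ B i) j)
    exact hr.symm.trans (hchain j).symm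
  have hfinf : (Prod.fst '' Y).Finite := hinf.image _
  have hfins : (Prod.snd '' Y).Finite := hinf.image _
  obtain ⟨i, hi | hi⟩ := hunb (max (Prod.fst '' Y).ncard (Prod.snd '' Y).ncard + 1)
  · obtain ⟨j, hj, hsub⟩ : ∃ j, Odd j ∧ A i ⊆ A j := by
      rcases Nat.even_or_odd i with he | ho
      · exact ⟨i + 1, he.add_one, (hjoinE i he).1.subset⟩
      · exact ⟨i, ho, subset_rfl⟩
    have h1 : (A i).ncard ≤ (Set.Icc (a j) (b j)).ncard :=
      Set.ncard_le_ncard (by rw [← hAeq j]; exact hsub) (Set.finite_Icc _ _)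
    have h2 : (Set.Icc (a j) (b j)).ncard ≤ (Prod.fst '' Y).ncard :=
      Set.ncard_le_ncard (hcovH j hj) hfinf
    omega
  · obtain ⟨j, hj, hsub⟩ : ∃ j, Even j ∧ B i ⊆ B j := by
      rcases Nat.even_or_odd i with he | ho
      · exact ⟨i, he, subset_rfl⟩
      · exact ⟨i + 1, ho.add_one, (hjoinO i ho).1.subset⟩
    have h1 : (B i).ncard ≤ (Set.Icc (c j) (d j)).ncard :=
      Set.ncard_le_ncard (by rw [← hBeq j]; exact hsub) (Set.finite_Icc _ _)
    have h2 : (Set.Icc (c j) (d j)).ncard ≤ (Prod.snd '' Y).ncard :=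
      Set.ncard_le_ncard (hcovV j hj) hfins
    omega
end
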